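/- Let k ≥ 2 and suppose that for every α ∈ F_q there exist two pairs (x₁, y₁), (x₂, y₂) ∈ F_q × F_q with x₁^k + y₁^k = α = x₂^k + y₂^k, x₁^k ≠ x₂^k and y₁^k ≠ y₂^k. Let C ∈ T_n(F_q) be a matrix all of whose diagonal entries are equal, and such that all nonzero off-diagonal entries of C lie in a single row (or all lie in a single column). Then there exist X, Y ∈ T_n(F_q) with C = X^k + Y^k. -/

import Mathlib

open Finset

open Finset

lemma row_pow {n : ℕ} {F : Type*} [Field F] (d a : Fin n → F) (r : Fin n) (m : ℕ) :
    (Matrix.of fun i j => if i = j then d i else if i = r then a j else 0 :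
      Matrix (Fin n) (Fin n) F) ^ m
    = Matrix.of fun i j => if i = j then d i ^ m
        else if i = r then a j * ∑ t ∈ range m, d j ^ t * d r ^ (m - 1 - t) else 0 := by
  induction m with
  | zero =>
    ext i j
    by_cases h : i = j <;> simp [Matrix.one_apply, h]
  | succ m ih =>
    rw [pow_succ, ih]
    ext i j
    rw [Matrix.mul_apply]
    by_cases hir : i = r
    · subst hir
      by_cases hj : j = i
      · subst hj
        rw [Finset.sum_eq_single j]
        · simp [pow_succ]
        · intro l _ hl
          simp [Matrix.of_apply, hl, Ne.symm hl]
        · simp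
      · rw [← Finset.sum_erase_add _ _ (mem_univ i)]
        rw [Finset.sum_eq_single_of_mem j (by simp [hj])]
        · have key : a j * ∑ t ∈ range (m+1), d j ^ t * d i ^ (m - t)
              = (a j * ∑ t ∈ range m, d j ^ t * d i ^ (m-1-t)) * d j + d i ^ m * a j := by
            rw [Finset.sum_range_succ' (fun t => d j ^ t * d i ^ (m - t)) m]
            simp only [pow_zero, one_mul, Nat.sub_zero]
            rw [Finset.mul_sum, Finset.sum_mul, mul_add, Finset.mul_sum]
            congr 1
            · exact Finset.sum_congr rfl fun t ht => by rw [Nat.sub_sub]; ring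
            · ring
          simp only [Matrix.of_apply, Nat.add_sub_cancel, if_neg hj, if_neg (Ne.symm hj),
            eq_self_iff_true, if_true]
          rw [key]
        · intro l hl hlj
          have hlr : l ≠ i := by simpa using (Finset.mem_erase.mp hl).1
          simp [Matrix.of_apply, hlj, hlr]
    · rw [Finset.sum_eq_single i]
      · by_cases h : i = j <;> simp [Matrix.of_apply, h, hir, pow_succ]
      · intro l _ hl
        simp [Matrix.of_apply, Ne.symm hl, hir]
      · simp


/-- Assuming every `α ∈ F_q` has two representations as sums of two `k`-th powers
with distinct `k`-th powers coordinatewise: an upper triangular matrix with constant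
diagonal whose nonzero off-diagonal entries all lie in a single row (or all in a
single column) is a sum of two `k`-th powers of upper triangular matrices. -/
theorem stmt_18 (k n : ℕ) (hk : 2 ≤ k)
    (F : Type*) [Field F] [Fintype F]
    (hsol : ∀ α : F, ∃ x₁ y₁ x₂ y₂ : F,
      x₁ ^ k + y₁ ^ k = α ∧ x₂ ^ k + y₂ ^ k = α ∧
      x₁ ^ k ≠ x₂ ^ k ∧ y₁ ^ k ≠ y₂ ^ k)
    (C : Matrix (Fin n) (Fin n) F) (hC : C.BlockTriangular id)
    (hdiag : ∀ i j : Fin n, C i i = C j j)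
    (hrowcol :
      (∃ r : Fin n, ∀ i j : Fin n, i ≠ j → C i j ≠ 0 → i = r) ∨
      (∃ c : Fin n, ∀ i j : Fin n, i ≠ j → C i j ≠ 0 → j = c)) :
    ∃ X Y : Matrix (Fin n) (Fin n) F,
      X.BlockTriangular id ∧ Y.BlockTriangular id ∧ C = X ^ k + Y ^ k := by
  rcases hrowcol with ⟨r, hrow⟩ | ⟨c, hcol⟩
  · obtain ⟨x₁, y₁, x₂, y₂, h1, h2, hx, hy⟩ := hsol (C r r)
    have hs : (∑ t ∈ range k, x₂ ^ t * x₁ ^ (k - 1 - t)) ≠ 0 := by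
      intro h
      apply hx
      have h2' := geom_sum₂_mul x₂ x₁ k
      rw [h, zero_mul] at h2'
      exact (sub_eq_zero.mp h2'.symm).symm
    set s : F := ∑ t ∈ range k, x₂ ^ t * x₁ ^ (k - 1 - t) with hs_def
    set d : Fin n → F := fun j => if j = r then x₁ else x₂ with hd
    set e : Fin n → F := fun j => if j = r then y₁ else y₂ with he
    set a : Fin n → F := fun j => if j = r then 0 else C r j / s with ha
    refine ⟨Matrix.of fun i j => if i = j then d i else if i = r then a j else 0,
            Matrix.of fun i j => if i = j then e i else if i = r then (0:F) else 0,
            ?_, ?_, ?_⟩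
    · intro i j hij
      have hne : i ≠ j := fun h => by simp [h] at hij
      simp only [Matrix.of_apply, if_neg hne]
      by_cases hir : i = r
      · have hjr : j ≠ r := fun h => by
          rw [hir, h] at hij; exact lt_irrefl _ hij
        simp only [if_pos hir, ha, if_neg hjr]
        rw [← hir, hC hij, zero_div]
      · simp [hir]
    · intro i j hij
      have hne : i ≠ j := fun h => by simp [h] at hij
      simp [Matrix.of_apply, hne]
    · rw [row_pow d a r k, row_pow e (fun _ => 0) r k]
      ext i j
      simp only [Matrix.add_apply, Matrix.of_apply]
      by_cases hij : i = j
      · rw [← hij, if_pos rfl, if_pos rfl, hdiag i r]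
        by_cases hir : i = r
        · simp only [hd, he, hir, if_pos rfl]
          exact h1.symm
        · simp only [hd, he, if_neg hir]
          exact h2.symm
      · by_cases hir : i = r
        · have hjr : j ≠ r := fun h => hij (hir.trans h.symm)
          have hsum : (∑ t ∈ range k, d j ^ t * d r ^ (k - 1 - t)) = s := by
            simp [hd, hjr, hs_def]
          rw [if_neg hij, if_neg hij, if_pos hir, if_pos hir, hsum, zero_mul, add_zero]
          simp only [ha, if_neg hjr]
          rw [div_mul_cancel₀ _ hs, hir]
        · have hcz : C i j = 0 := by
            by_contra h
            exact hir (hrow i j hij h)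
          simp [hij, hir, hcz]
  · obtain ⟨x₁, y₁, x₂, y₂, h1, h2, hx, hy⟩ := hsol (C c c)
    have hs : (∑ t ∈ range k, x₂ ^ t * x₁ ^ (k - 1 - t)) ≠ 0 := by
      intro h
      apply hx
      have h2' := geom_sum₂_mul x₂ x₁ k
      rw [h, zero_mul] at h2'
      exact (sub_eq_zero.mp h2'.symm).symm
    set s : F := ∑ t ∈ range k, x₂ ^ t * x₁ ^ (k - 1 - t) with hs_def
    set d : Fin n → F := fun j => if j = c then x₁ else x₂ with hd
    set e : Fin n → F := fun j => if j = c then y₁ else y₂ with he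
    set a : Fin n → F := fun i => if i = c then 0 else C i c / s with ha
    refine ⟨(Matrix.of (fun i j => if i = j then d i else if i = c then a j else 0)).transpose,
            Matrix.of fun i j => if i = j then e i else if i = c then (0:F) else 0,
            ?_, ?_, ?_⟩
    · intro i j hij
      have hne : i ≠ j := fun h => by simp [h] at hij
      simp only [Matrix.transpose_apply, Matrix.of_apply, if_neg (Ne.symm hne)]
      by_cases hjc : j = c
      · have hic : i ≠ c := fun h => by
          rw [hjc, h] at hij; exact lt_irrefl _ hij
        simp only [if_pos hjc, ha, if_neg hic]
        have : C i c = 0 := hC (by simpa [hjc] using hij)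
        rw [this, zero_div]
      · simp [hjc]
    · intro i j hij
      have hne : i ≠ j := fun h => by simp [h] at hij
      simp [Matrix.of_apply, hne]
    · rw [← Matrix.transpose_pow, row_pow d a c k, row_pow e (fun _ => 0) c k]
      ext i j
      simp only [Matrix.add_apply, Matrix.transpose_apply, Matrix.of_apply]
      by_cases hij : i = j
      · rw [← hij, if_pos rfl, if_pos rfl, hdiag i c]
        by_cases hic : i = c
        · simp only [hd, he, hic, if_pos rfl]
          exact h1.symm
        · simp only [hd, he, if_neg hic]
          exact h2.symm
      · rw [if_neg (fun h => hij (h.symm)), if_neg hij]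
        by_cases hjc : j = c
        · have hic : i ≠ c := fun h => hij (h.trans hjc.symm)
          have hsum : (∑ t ∈ range k, d i ^ t * d c ^ (k - 1 - t)) = s := by
            simp [hd, hic, hs_def]
          rw [if_pos hjc, hsum]
          simp only [ha, if_neg hic]
          rw [div_mul_cancel₀ _ hs, hjc, add_zero]
        · have hcz : C i j = 0 := by
            by_contra h
            exact hjc (hcol i j hij h)
          rw [if_neg hjc, hcz]
          by_cases hir2 : i = c
          · simp
          · simp [hir2]
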